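/- Let Y be a finite label set with |Y| = K, and let P^S, P^T be probability measures on Z × Y (Z a metric space) such that p_k := P^S(Y=y_k) > 0 and q_k := P^T(Y=y_k) > 0 for every k. Endow Z × Y with the distance d((z,y),(z',y')) = d_Z(z,z') + 𝟙[y ≠ y']·M for some M > 0 (or any well-defined metric making distinct labels positively separated). Then the conditional symmetric support divergence D^c_supp(P^S_{Z|Y}, P^T_{Z|Y}) = Σ_k [ p_k E_{z∼P^S_{Z|k}} d_Z(z, supp(P^T_{Z|k})) + q_k E_{z∼P^T_{Z|k}} d_Z(z, supp(P^S_{Z|k})) ] equals zero if and only if the symmetric support divergence of the joint distributions D_supp(P^S_{Z,Y}, P^T_{Z,Y}) equals zero. -/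

import Mathlib

open MeasureTheory Metric

def msupport {Z : Type*} [TopologicalSpace Z] [MeasurableSpace Z]
    (μ : Measure Z) : Set Z :=
  {z | ∀ U ∈ nhds z, μ U ≠ 0}

section aux
variable {Z Y : Type*} [MetricSpace Z] [MeasurableSpace Z] [BorelSpace Z]
    [MetricSpace Y] [MeasurableSpace Y] [BorelSpace Y] [Fintype Y]

lemma msupport_joint (M : ℝ) (hM : 0 < M)
    (hsep : ∀ y y' : Y, y ≠ y' → M ≤ dist y y')
    (c : Y → ℝ) (hc : ∀ y, 0 < c y) (μ : Y → Measure Z) :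
    msupport (∑ y, ENNReal.ofReal (c y) • (μ y).map (fun z => (z, y)))
      = ⋃ y, (msupport (μ y)) ×ˢ ({y} : Set Y) := by
  have hg : ∀ y : Y, Measurable (fun z : Z => (z, y)) :=
    fun y => measurable_id.prodMk measurable_const
  ext ⟨z, y⟩
  constructor
  · intro h
    refine Set.mem_iUnion.mpr ⟨y, ⟨?_, rfl⟩⟩
    intro U hU hU0
    obtain ⟨ε, hε, hball⟩ := Metric.mem_nhds_iff.mp hU
    set r := min ε M with hr
    have hrpos : 0 < r := lt_min hε hM
    apply h (Metric.ball (z, y) r) (Metric.ball_mem_nhds _ hrpos)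
    rw [← ball_prod_same, Measure.finset_sum_apply]
    apply Finset.sum_eq_zero
    intro y' _
    rw [Measure.smul_apply,
      Measure.map_apply (hg y') (measurableSet_ball.prod measurableSet_ball)]
    by_cases hy' : y' = y
    · subst hy'
      have hpre : (fun z : Z => (z, y')) ⁻¹' (Metric.ball z r ×ˢ Metric.ball y' r)
          = Metric.ball z r := by
        ext z'; simp [Set.mem_preimage, hrpos]
      rw [hpre]
      have hsub : Metric.ball z r ⊆ U := fun x hx =>
        hball (mem_ball.mpr (lt_of_lt_of_le (mem_ball.mp hx) (min_le_left ε M)))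
      have hle := measure_mono hsub (μ := μ y')
      rw [hU0] at hle
      have h0 : (μ y') (Metric.ball z r) = 0 := le_antisymm hle zero_le
      simp [h0]
    · have hpre : (fun z : Z => (z, y')) ⁻¹' (Metric.ball z r ×ˢ Metric.ball y r)
          = (∅ : Set Z) := by
        ext z'
        simp only [Set.mem_preimage, Set.mem_prod, Set.mem_empty_iff_false, iff_false,
          not_and, mem_ball]
        intro _
        exact not_lt.mpr (le_trans (min_le_right ε M) (hsep y' y hy'))
      rw [hpre]
      simp
  · intro h
    obtain ⟨y', hmem⟩ := Set.mem_iUnion.mp h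
    obtain ⟨hz, hy⟩ := hmem
    simp only [Set.mem_singleton_iff] at hy
    subst hy
    intro U hU hU0
    obtain ⟨ε, hε, hball⟩ := Metric.mem_nhds_iff.mp hU
    have hterm : (ENNReal.ofReal (c y) • (μ y).map (fun z => (z, y))) U = 0 := by
      refine le_antisymm ?_ zero_le
      calc (ENNReal.ofReal (c y) • (μ y).map (fun z => (z, y))) U
          ≤ (∑ y', ENNReal.ofReal (c y') • (μ y').map (fun z => (z, y'))) U := by
            rw [Measure.finset_sum_apply]
            exact Finset.single_le_sum
              (f := fun y' => (ENNReal.ofReal (c y') • (μ y').map (fun z => (z, y'))) U)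
              (fun i _ => zero_le) (Finset.mem_univ y)
        _ = 0 := hU0
    rw [Measure.smul_apply, smul_eq_mul, mul_eq_zero] at hterm
    rcases hterm with hc0 | hmap0
    · exact absurd hc0 (by simp [ENNReal.ofReal_eq_zero, not_le, hc y])
    · have hb : ((μ y).map (fun z => (z, y))) (Metric.ball z ε ×ˢ Metric.ball y ε) = 0 := by
        refine le_antisymm ?_ zero_le
        rw [← hmap0]
        exact measure_mono (by rw [ball_prod_same]; exact hball)
      rw [Measure.map_apply (hg y) (measurableSet_ball.prod measurableSet_ball)] at hb
      have hpre : (fun z' : Z => (z', y)) ⁻¹' (Metric.ball z ε ×ˢ Metric.ball y ε)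
          = Metric.ball z ε := by
        ext z'; simp [Set.mem_preimage, hε]
      rw [hpre] at hb
      exact hz (Metric.ball z ε) (Metric.ball_mem_nhds _ hε) hb

lemma infDist_pair_le (S : Y → Set Z) (y : Y) (hS : (S y).Nonempty) (z : Z) :
    infDist (z, y) (⋃ y', S y' ×ˢ ({y'} : Set Y)) ≤ infDist z (S y) := by
  refine le_of_forall_pos_le_add ?_
  intro ε hε
  obtain ⟨z', hz', hd⟩ := (infDist_lt_iff hS).mp
    (lt_add_of_pos_right (infDist z (S y)) hε)
  calc infDist (z, y) (⋃ y', S y' ×ˢ ({y'} : Set Y))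
      ≤ dist (z, y) (z', y) :=
        infDist_le_dist_of_mem (Set.mem_iUnion.mpr ⟨y, ⟨hz', rfl⟩⟩)
    _ = dist z z' := by simp [Prod.dist_eq, dist_nonneg]
    _ ≤ infDist z (S y) + ε := hd.le

lemma infDist_pair_zero_iff (M : ℝ) (hM : 0 < M)
    (hsep : ∀ y y' : Y, y ≠ y' → M ≤ dist y y')
    (S : Y → Set Z) (hS : ∀ y, (S y).Nonempty) (z : Z) (y : Y) :
    infDist (z, y) (⋃ y', S y' ×ˢ ({y'} : Set Y)) = 0 ↔ infDist z (S y) = 0 := by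
  constructor
  · intro h
    by_contra hne
    have hpos : 0 < infDist z (S y) := lt_of_le_of_ne infDist_nonneg (Ne.symm hne)
    set ε := min (infDist z (S y)) M with hε
    have hεpos : 0 < ε := lt_min hpos hM
    have hJne : (⋃ y', S y' ×ˢ ({y'} : Set Y)).Nonempty :=
      ⟨((hS y).choose, y), Set.mem_iUnion.mpr ⟨y, ⟨(hS y).choose_spec, rfl⟩⟩⟩
    obtain ⟨w, hw, hdw⟩ := (infDist_lt_iff hJne).mp (by rw [h]; exact hεpos)
    obtain ⟨y', hwy'⟩ := Set.mem_iUnion.mp hw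
    obtain ⟨hw1, hw2⟩ := hwy'
    simp only [Set.mem_singleton_iff] at hw2
    have hyy' : w.2 = y := by
      by_contra hne'
      have h1 : M ≤ dist y w.2 := hsep y w.2 (fun hh => hne' hh.symm)
      have h2 : dist y w.2 ≤ dist (z, y) w := by
        rw [Prod.dist_eq]; exact le_max_right _ _
      exact absurd hdw (not_lt.mpr (le_trans (min_le_right _ _) (le_trans h1 h2)))
    have hzw : dist z w.1 ≤ dist (z, y) w := by
      rw [Prod.dist_eq]; exact le_max_left _ _
    have : infDist z (S y) ≤ dist z w.1 := by
      have : y' = y := hw2.symm.trans hyy'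
      exact infDist_le_dist_of_mem (this ▸ hw1)
    have : infDist z (S y) < ε := lt_of_le_of_lt (this.trans hzw) hdw
    exact absurd (min_le_left (infDist z (S y)) M) (not_le.mpr (hε ▸ this)) -- fix?
  · intro h
    refine le_antisymm ?_ infDist_nonneg
    calc infDist (z, y) (⋃ y', S y' ×ˢ ({y'} : Set Y)) ≤ infDist z (S y) :=
        infDist_pair_le S y (hS y) z
      _ = 0 := h


lemma integral_sum_smul_map (c : Y → ℝ) (hc : ∀ y, 0 ≤ c y) (μ : Y → Measure Z)
    (f : Z × Y → ℝ) (hf : Continuous f)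
    (hfi : ∀ y, Integrable (fun z => f (z, y)) (μ y)) :
    ∫ w, f w ∂(∑ y, ENNReal.ofReal (c y) • (μ y).map (fun z => (z, y)))
      = ∑ y, c y * ∫ z, f (z, y) ∂(μ y) := by
  have hg : ∀ y : Y, Measurable (fun z : Z => (z, y)) :=
    fun y => measurable_id.prodMk measurable_const
  have hmap : ∀ y, Integrable f ((μ y).map (fun z => (z, y))) := fun y =>
    (integrable_map_measure hf.aestronglyMeasurable (hg y).aemeasurable).mpr (hfi y)
  rw [integral_finset_sum_measure (fun y _ => (hmap y).smul_measure ENNReal.ofReal_ne_top)]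
  refine Finset.sum_congr rfl fun y _ => ?_
  rw [integral_smul_measure, integral_map (hg y).aemeasurable hf.aestronglyMeasurable,
    ENNReal.toReal_ofReal (hc y), smul_eq_mul]

end aux

/-- Proposition 4: with all class probabilities positive and a metric on the
joint space separating distinct labels, the conditional symmetric support divergence vanishes
iff the symmetric support divergence of the joint distributions vanishes. -/
theorem cssd_zero_iff_joint_ssd_zero
    {Z Y : Type*} [MetricSpace Z] [MeasurableSpace Z] [BorelSpace Z]
    [MetricSpace Y] [MeasurableSpace Y] [BorelSpace Y] [Fintype Y]
    (M : ℝ) (hM : 0 < M)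
    (hsep : ∀ y y' : Y, y ≠ y' → M ≤ dist y y')
    (p q : Y → ℝ)
    (hp_pos : ∀ y, 0 < p y) (hq_pos : ∀ y, 0 < q y)
    (hp_sum : ∑ y, p y = 1) (hq_sum : ∑ y, q y = 1)
    (PSc PTc : Y → Measure Z)
    [∀ y, IsProbabilityMeasure (PSc y)] [∀ y, IsProbabilityMeasure (PTc y)]
    (PSJ PTJ : Measure (Z × Y))
    (hPSJ : PSJ = ∑ y, ENNReal.ofReal (p y) • (PSc y).map (fun z => (z, y)))
    (hPTJ : PTJ = ∑ y, ENNReal.ofReal (q y) • (PTc y).map (fun z => (z, y)))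
    (hsuppS : ∀ y, (msupport (PSc y)).Nonempty)
    (hsuppT : ∀ y, (msupport (PTc y)).Nonempty)
    (hintS : ∀ y, Integrable (fun z => infDist z (msupport (PTc y))) (PSc y))
    (hintT : ∀ y, Integrable (fun z => infDist z (msupport (PSc y))) (PTc y))
    (hintJS : Integrable (fun w => infDist w (msupport PTJ)) PSJ)
    (hintJT : Integrable (fun w => infDist w (msupport PSJ)) PTJ) :
    (∑ y, (p y * (∫ z, infDist z (msupport (PTc y)) ∂(PSc y))
          + q y * (∫ z, infDist z (msupport (PSc y)) ∂(PTc y)))) = 0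
      ↔ (∫ w, infDist w (msupport PTJ) ∂PSJ) + (∫ w, infDist w (msupport PSJ) ∂PTJ) = 0 := by
  classical
  -- joint supports
  have hJT : msupport PTJ = ⋃ y, (msupport (PTc y)) ×ˢ ({y} : Set Y) := by
    rw [hPTJ]; exact msupport_joint M hM hsep q hq_pos PTc
  have hJS : msupport PSJ = ⋃ y, (msupport (PSc y)) ×ˢ ({y} : Set Y) := by
    rw [hPSJ]; exact msupport_joint M hM hsep p hp_pos PSc
  -- pointwise zero-iff
  have hiffT : ∀ (z : Z) (y : Y),
      infDist (z, y) (msupport PTJ) = 0 ↔ infDist z (msupport (PTc y)) = 0 := by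
    intro z y; rw [hJT]; exact infDist_pair_zero_iff M hM hsep _ hsuppT z y
  have hiffS : ∀ (z : Z) (y : Y),
      infDist (z, y) (msupport PSJ) = 0 ↔ infDist z (msupport (PSc y)) = 0 := by
    intro z y; rw [hJS]; exact infDist_pair_zero_iff M hM hsep _ hsuppS z y
  -- pointwise bounds
  have hbT : ∀ (y : Y) (z : Z),
      infDist (z, y) (msupport PTJ) ≤ infDist z (msupport (PTc y)) := by
    intro y z; rw [hJT]; exact infDist_pair_le _ y (hsuppT y) z
  have hbS : ∀ (y : Y) (z : Z),
      infDist (z, y) (msupport PSJ) ≤ infDist z (msupport (PSc y)) := by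
    intro y z; rw [hJS]; exact infDist_pair_le _ y (hsuppS y) z
  -- integrability of joint distances w.r.t. class conditionals
  have hcontT : Continuous fun w : Z × Y => infDist w (msupport PTJ) := continuous_infDist_pt _
  have hcontS : Continuous fun w : Z × Y => infDist w (msupport PSJ) := continuous_infDist_pt _
  have hintCT : ∀ y, Integrable (fun z => infDist (z, y) (msupport PTJ)) (PSc y) := by
    intro y
    refine (hintS y).mono'
      (hcontT.comp (continuous_id.prodMk continuous_const)).aestronglyMeasurable
      (Filter.Eventually.of_forall fun z => ?_)
    rw [Real.norm_of_nonneg infDist_nonneg]; exact hbT y z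
  have hintCS : ∀ y, Integrable (fun z => infDist (z, y) (msupport PSJ)) (PTc y) := by
    intro y
    refine (hintT y).mono'
      (hcontS.comp (continuous_id.prodMk continuous_const)).aestronglyMeasurable
      (Filter.Eventually.of_forall fun z => ?_)
    rw [Real.norm_of_nonneg infDist_nonneg]; exact hbS y z
  -- rewrite joint integrals
  have eqS : ∫ w, infDist w (msupport PTJ) ∂PSJ
      = ∑ y, p y * ∫ z, infDist (z, y) (msupport PTJ) ∂(PSc y) := by
    rw [hPSJ]
    exact integral_sum_smul_map p (fun y => (hp_pos y).le) PSc _ hcontT hintCT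
  have eqT : ∫ w, infDist w (msupport PSJ) ∂PTJ
      = ∑ y, q y * ∫ z, infDist (z, y) (msupport PSJ) ∂(PTc y) := by
    rw [hPTJ]
    exact integral_sum_smul_map q (fun y => (hq_pos y).le) PTc _ hcontS hintCS
  -- per-class equivalence of integral vanishing
  have keyT : ∀ y, (∫ z, infDist z (msupport (PTc y)) ∂(PSc y)) = 0
      ↔ (∫ z, infDist (z, y) (msupport PTJ) ∂(PSc y)) = 0 := by
    intro y
    rw [integral_eq_zero_iff_of_nonneg (fun z => infDist_nonneg) (hintS y),
      integral_eq_zero_iff_of_nonneg (fun z => infDist_nonneg) (hintCT y)]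
    exact Filter.eventually_congr (Filter.Eventually.of_forall fun z => by
      simp only [Pi.zero_apply]; exact (hiffT z y).symm)
  have keyS : ∀ y, (∫ z, infDist z (msupport (PSc y)) ∂(PTc y)) = 0
      ↔ (∫ z, infDist (z, y) (msupport PSJ) ∂(PTc y)) = 0 := by
    intro y
    rw [integral_eq_zero_iff_of_nonneg (fun z => infDist_nonneg) (hintT y),
      integral_eq_zero_iff_of_nonneg (fun z => infDist_nonneg) (hintCS y)]
    exact Filter.eventually_congr (Filter.Eventually.of_forall fun z => by
      simp only [Pi.zero_apply]; exact (hiffS z y).symm)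
  -- zero characterizations of both sides
  have hnnA : ∀ y, (0:ℝ) ≤ ∫ z, infDist z (msupport (PTc y)) ∂(PSc y) :=
    fun y => integral_nonneg fun z => infDist_nonneg
  have hnnB : ∀ y, (0:ℝ) ≤ ∫ z, infDist z (msupport (PSc y)) ∂(PTc y) :=
    fun y => integral_nonneg fun z => infDist_nonneg
  have hnnC : ∀ y, (0:ℝ) ≤ ∫ z, infDist (z, y) (msupport PTJ) ∂(PSc y) :=
    fun y => integral_nonneg fun z => infDist_nonneg
  have hnnD : ∀ y, (0:ℝ) ≤ ∫ z, infDist (z, y) (msupport PSJ) ∂(PTc y) :=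
    fun y => integral_nonneg fun z => infDist_nonneg
  rw [eqS, eqT, ← Finset.sum_add_distrib]
  rw [Finset.sum_eq_zero_iff_of_nonneg (fun y _ =>
      add_nonneg (mul_nonneg (hp_pos y).le (hnnA y)) (mul_nonneg (hq_pos y).le (hnnB y))),
    Finset.sum_eq_zero_iff_of_nonneg (fun y _ =>
      add_nonneg (mul_nonneg (hp_pos y).le (hnnC y)) (mul_nonneg (hq_pos y).le (hnnD y)))]
  refine forall_congr' fun y => ?_
  refine imp_congr_right fun _ => ?_
  rw [add_eq_zero_iff_of_nonneg (mul_nonneg (hp_pos y).le (hnnA y))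
      (mul_nonneg (hq_pos y).le (hnnB y)),
    add_eq_zero_iff_of_nonneg (mul_nonneg (hp_pos y).le (hnnC y))
      (mul_nonneg (hq_pos y).le (hnnD y)),
    mul_eq_zero, mul_eq_zero, mul_eq_zero, mul_eq_zero]
  have hp0 : p y ≠ 0 := (hp_pos y).ne'
  have hq0 : q y ≠ 0 := (hq_pos y).ne'
  constructor
  · rintro ⟨hA | hA, hB | hB⟩ <;> first
      | exact absurd hA hp0 | exact absurd hB hq0
      | exact ⟨Or.inr ((keyT y).mp hA), Or.inr ((keyS y).mp hB)⟩
  · rintro ⟨hC | hC, hD | hD⟩ <;> first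
      | exact absurd hC hp0 | exact absurd hD hq0
      | exact ⟨Or.inr ((keyT y).mpr hC), Or.inr ((keyS y).mpr hD)⟩
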